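/- Let A ∈ ℝ^{m×m} be positive definite, meaning xᵀAx > 0 for every nonzero x ∈ ℝ^m (A need not be symmetric), let B ∈ ℝ^{m×n} have full column rank (rank B = n), and let α ≥ 0, β > 0. Suppose λ ∈ ℂ and w = (u, v) ∈ ℂ^{m+n} is nonzero with Q(α,β)w = λ P(α,β)w. Define the Rayleigh quotients a + ib = (u*Au)/(u*u) with a, b ∈ ℝ, and c = (u*BBᵀu)/(u*u) ∈ ℝ (u ≠ 0 so these are well defined). Then λ satisfies the scalar quadratic equation λ²(αβ + 2βa + 4c + 2βbi) − λ(2αβ + 3βa + 4c + 3βbi) + (αβ + βa + c + βbi) = 0. -/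

import Mathlib

open Matrix

/-- The MGSSP splitting matrix `P(α,β) = [[αI+2A, 2B], [−2Bᵀ, βI]]`. -/
noncomputable def Pmat {m n : ℕ} (A : Matrix (Fin m) (Fin m) ℝ) (B : Matrix (Fin m) (Fin n) ℝ)
    (α β : ℝ) : Matrix (Fin m ⊕ Fin n) (Fin m ⊕ Fin n) ℝ :=
  fromBlocks (α • 1 + (2 : ℝ) • A) ((2 : ℝ) • B) (-((2 : ℝ) • Bᵀ)) (β • 1)

/-- The MGSSP splitting matrix `Q(α,β) = [[αI+A, B], [−Bᵀ, βI]]`. -/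
noncomputable def Qmat {m n : ℕ} (A : Matrix (Fin m) (Fin m) ℝ) (B : Matrix (Fin m) (Fin n) ℝ)
    (α β : ℝ) : Matrix (Fin m ⊕ Fin n) (Fin m ⊕ Fin n) ℝ :=
  fromBlocks (α • 1 + A) B (-Bᵀ) (β • 1)


/-- Equation (11): an eigenvalue `λ` of the MGSSP iteration matrix satisfies the scalar
quadratic equation `λ²(αβ + 2βa + 4c + 2βbi) − λ(2αβ + 3βa + 4c + 3βbi)
+ (αβ + βa + c + βbi) = 0`, where `a + ib` and `c` are the Rayleigh quotients of `A`
and `BBᵀ` at the first block component `u` of the eigenvector. -/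
lemma mapC_inj {m n : ℕ} (B : Matrix (Fin m) (Fin n) ℝ) (hB : B.rank = n)
    (v : Fin n → ℂ) (hv : B.map Complex.ofReal *ᵥ v = 0) : v = 0 := by
  have hr : (Bᵀ * B).rank = n := by rw [Matrix.rank_transpose_mul_self, hB]
  have htop : LinearMap.range (Bᵀ * B).mulVecLin = ⊤ := by
    apply Submodule.eq_top_of_finrank_eq
    rw [← Matrix.rank, hr]
    simp
  have hinj : Function.Injective (Bᵀ * B).mulVec := by
    have := (LinearMap.injective_iff_surjective (f := (Bᵀ * B).mulVecLin)).mpr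
      (LinearMap.range_eq_top.mp htop)
    simpa only [Function.Injective, ← Matrix.mulVecLin_apply] using this
  have hu : IsUnit (Bᵀ * B) := Matrix.mulVec_injective_iff_isUnit.mp hinj
  have hdet : (Bᵀ * B).det ≠ 0 := by
    have := (Matrix.isUnit_iff_isUnit_det _).mp hu
    exact isUnit_iff_ne_zero.mp this
  have hdetC : ((Bᵀ * B).map Complex.ofReal).det ≠ 0 := by
    have h := RingHom.map_det Complex.ofRealHom (Bᵀ * B)
    simp only [RingHom.mapMatrix_apply] at h
    rw [show (Complex.ofReal : ℝ → ℂ) = ⇑Complex.ofRealHom from rfl, ← h]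
    simpa using hdet
  have huC : IsUnit ((Bᵀ * B).map Complex.ofReal) :=
    (Matrix.isUnit_iff_isUnit_det _).mpr (isUnit_iff_ne_zero.mpr hdetC)
  have hinjC := Matrix.mulVec_injective_iff_isUnit.mpr huC
  have h0 : ((Bᵀ * B).map Complex.ofReal) *ᵥ v = ((Bᵀ * B).map Complex.ofReal) *ᵥ 0 := by
    have hmm : (Bᵀ * B).map Complex.ofReal = Bᵀ.map Complex.ofReal * B.map Complex.ofReal := by
      have h2 := Matrix.map_mul (L := Bᵀ) (M := B) (f := Complex.ofRealHom)
      exact h2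
    rw [hmm, ← Matrix.mulVec_mulVec, hv]
    simp
  exact hinjC h0

theorem mgssp_eigenvalue_quadratic {m n : ℕ}
    (A : Matrix (Fin m) (Fin m) ℝ) (B : Matrix (Fin m) (Fin n) ℝ)
    (hA : ∀ x : Fin m → ℝ, x ≠ 0 → 0 < x ⬝ᵥ (A *ᵥ x))
    (hB : B.rank = n)
    (α β : ℝ) (hα : 0 ≤ α) (hβ : 0 < β)
    (lam : ℂ) (u : Fin m → ℂ) (v : Fin n → ℂ) (hw : Sum.elim u v ≠ 0)
    (heig : (Qmat A B α β).map Complex.ofReal *ᵥ Sum.elim u v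
        = lam • ((Pmat A B α β).map Complex.ofReal *ᵥ Sum.elim u v))
    (a b c : ℝ)
    (hab : (star u ⬝ᵥ (A.map Complex.ofReal *ᵥ u)) / (star u ⬝ᵥ u)
        = (a : ℂ) + (b : ℂ) * Complex.I)
    (hc : (star u ⬝ᵥ ((B * Bᵀ).map Complex.ofReal *ᵥ u)) / (star u ⬝ᵥ u) = (c : ℂ)) :
    lam ^ 2 * ((α : ℂ) * β + 2 * β * a + 4 * c + 2 * β * b * Complex.I)
      - lam * (2 * (α : ℂ) * β + 3 * β * a + 4 * c + 3 * β * b * Complex.I)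
      + ((α : ℂ) * β + β * a + c + β * b * Complex.I) = 0 := by
  set Ac := A.map Complex.ofReal with hAc
  set Bc := B.map Complex.ofReal with hBc
  set Btc := Bᵀ.map Complex.ofReal with hBtc
  -- map lemmas
  have hmap1 : (α • (1 : Matrix (Fin m) (Fin m) ℝ) + A).map Complex.ofReal
      = (α : ℂ) • 1 + Ac := by
    ext i j; by_cases h : i = j <;> simp [Matrix.map_apply, Matrix.one_apply, h, hAc]
  have hmap2 : (α • (1 : Matrix (Fin m) (Fin m) ℝ) + (2:ℝ) • A).map Complex.ofReal
      = (α : ℂ) • 1 + (2:ℂ) • Ac := by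
    ext i j; by_cases h : i = j <;> simp [Matrix.map_apply, Matrix.one_apply, h, hAc]
  have hmap3 : ((2:ℝ) • B).map Complex.ofReal = (2:ℂ) • Bc := by
    ext i j; simp [Matrix.map_apply, hBc]
  have hmap4 : (-Bᵀ).map Complex.ofReal = -Btc := by
    ext i j; simp [Matrix.map_apply, hBtc]
  have hmap5 : (-((2:ℝ) • Bᵀ)).map Complex.ofReal = -((2:ℂ) • Btc) := by
    ext i j; simp [Matrix.map_apply, hBtc]
  have hmap6 : (β • (1 : Matrix (Fin n) (Fin n) ℝ)).map Complex.ofReal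
      = (β : ℂ) • 1 := by
    ext i j; by_cases h : i = j <;> simp [Matrix.map_apply, Matrix.one_apply, h]
  have hQ : (Qmat A B α β).map Complex.ofReal *ᵥ Sum.elim u v
      = Sum.elim ((α : ℂ) • u + Ac *ᵥ u + Bc *ᵥ v)
          (-(Btc *ᵥ u) + (β : ℂ) • v) := by
    rw [Qmat, fromBlocks_map, fromBlocks_mulVec, hmap1, hmap4, hmap6]
    simp only [Sum.elim_comp_inl, Sum.elim_comp_inr, add_mulVec, smul_mulVec,
      one_mulVec, neg_mulVec, ← hBc]
  have hP : (Pmat A B α β).map Complex.ofReal *ᵥ Sum.elim u v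
      = Sum.elim ((α : ℂ) • u + (2:ℂ) • (Ac *ᵥ u) + (2:ℂ) • (Bc *ᵥ v))
          (-((2:ℂ) • (Btc *ᵥ u)) + (β : ℂ) • v) := by
    rw [Pmat, fromBlocks_map, fromBlocks_mulVec, hmap2, hmap3, hmap5, hmap6]
    simp only [Sum.elim_comp_inl, Sum.elim_comp_inr, add_mulVec, smul_mulVec,
      one_mulVec, neg_mulVec]
  rw [hQ, hP] at heig
  have h1 : (α : ℂ) • u + Ac *ᵥ u + Bc *ᵥ v
      = lam • ((α : ℂ) • u + (2:ℂ) • (Ac *ᵥ u) + (2:ℂ) • (Bc *ᵥ v)) := by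
    funext i
    have := congrFun heig (Sum.inl i)
    simpa using this
  have h2 : -(Btc *ᵥ u) + (β : ℂ) • v
      = lam • (-((2:ℂ) • (Btc *ᵥ u)) + (β : ℂ) • v) := by
    funext j
    have := congrFun heig (Sum.inr j)
    simpa using this
  -- u ≠ 0
  have hu : u ≠ 0 := by
    intro hu0
    have hv : v ≠ 0 := by
      intro hv0
      apply hw
      funext x
      cases x with
      | inl i => simp [hu0]
      | inr j => simp [hv0]
    obtain ⟨j, hj0⟩ := Function.ne_iff.mp hv
    have hj : v j ≠ 0 := by simpa using hj0
    have h2j := congrFun h2 j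
    simp [hu0, Pi.smul_apply, smul_eq_mul] at h2j
    -- h2j : β * v j = lam * (β * v j)
    have hlam : lam = 1 := by
      have hne : (β : ℂ) * v j ≠ 0 := by
        apply mul_ne_zero _ hj
        exact_mod_cast hβ.ne'
      have hz : (1 - lam) * ((β:ℂ) * v j) = 0 := by linear_combination h2j
      rcases mul_eq_zero.mp hz with h | h
      · exact (sub_eq_zero.mp h).symm
      · exact absurd h hne
    have h1v : Bc *ᵥ v = 0 := by
      funext i
      have h1i := congrFun h1 i
      simp [hu0, hlam, Pi.smul_apply, smul_eq_mul] at h1i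
      -- h1i : (Bc *ᵥ v) i = 2 * (Bc *ᵥ v) i
      have : (Bc *ᵥ v) i = 0 := by linear_combination -h1i
      simpa using this
    exact hj (congrFun (mapC_inj B hB v h1v) j)
  have hS : (star u ⬝ᵥ u) ≠ 0 := by
    intro h
    open ComplexOrder in
    exact hu (dotProduct_star_self_eq_zero.mp h)
  have hp : star u ⬝ᵥ (Ac *ᵥ u) = ((a:ℂ) + (b:ℂ) * Complex.I) * (star u ⬝ᵥ u) :=
    (div_eq_iff hS).mp hab
  have hBBt : Bc * Btc = (B * Bᵀ).map Complex.ofReal := by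
    have h2 := Matrix.map_mul (L := B) (M := Bᵀ) (f := Complex.ofRealHom)
    rw [hBc, hBtc]; exact h2.symm
  have hr : star u ⬝ᵥ ((B * Bᵀ).map Complex.ofReal *ᵥ u) = (c:ℂ) * (star u ⬝ᵥ u) :=
    (div_eq_iff hS).mp hc
  -- scalar equations
  have e1 := congrArg (fun w => star u ⬝ᵥ w) h1
  simp only [dotProduct_add, dotProduct_smul, smul_eq_mul] at e1
  have e2 := congrArg (fun w => star u ⬝ᵥ (Bc *ᵥ w)) h2
  simp only [mulVec_add, mulVec_smul, mulVec_neg, mulVec_mulVec, hBBt,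
    dotProduct_add, dotProduct_smul, dotProduct_neg, smul_eq_mul] at e2
  have key : (lam ^ 2 * ((α : ℂ) * β + 2 * β * a + 4 * c + 2 * β * b * Complex.I)
      - lam * (2 * (α : ℂ) * β + 3 * β * a + 4 * c + 3 * β * b * Complex.I)
      + ((α : ℂ) * β + β * a + c + β * b * Complex.I)) * (star u ⬝ᵥ u) = 0 := by
    linear_combination ((β:ℂ) * (1 - lam)) * e1 - (1 - 2*lam) * e2
      - ((β:ℂ) * (1 - lam) * (1 - 2*lam)) * hp - (1 - 2*lam)^2 * hr
  rcases mul_eq_zero.mp key with h | h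
  · exact h
  · exact absurd h hS
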